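/- The map 𝒢 : 𝒜* → End(𝒜), 𝒢(φ)(x) = (id⊗φ)(Δ(x)), is a *-map: for every φ ∈ 𝒜*, the adjoint of the operator 𝒢(φ) with respect to the inner product ⟨a,b⟩ = h(a*b) equals 𝒢(φ*), where the involution on 𝒜* is defined by φ*(a) = conj(φ(S(a)*)). -/

import Mathlib

/- Setting: a finite quantum group `A` with Haar functional `h` and inner product
`⟨a, b⟩ = h(a* b)` on `A`.
STATEMENT 7: `𝒢 : A* → End(A)`, `𝒢(φ)(x) = (id ⊗ φ)(Δ(x))`, is a *-map: the adjoint
of `𝒢(φ)` is `𝒢(φ*)`, where `φ*(a) = conj(φ(S(a)*))`.  The functional `φ*` is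
quantified as the (unique) linear functional `ψ` with `ψ(a) = conj(φ(S(a)*))`. -/

open scoped TensorProduct ComplexOrder
open TensorProduct

section
variable {A : Type*} [Ring A] [HopfAlgebra ℂ A] [StarRing A] [StarModule ℂ A]
  [FiniteDimensional ℂ A]

/-- `𝒢(φ) = (id ⊗ φ) ∘ Δ : A → A`. -/
noncomputable def Gmap (φ : A →ₗ[ℂ] ℂ) : A →ₗ[ℂ] A :=
  (TensorProduct.rid ℂ A).toLinearMap ∘ₗ TensorProduct.map LinearMap.id φ ∘ₗ
    Coalgebra.comul (R := ℂ)

/-- `h ⊗ id : A ⊗ A → A`. -/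
noncomputable def lap (h : A →ₗ[ℂ] ℂ) : A ⊗[ℂ] A →ₗ[ℂ] A :=
  (TensorProduct.lid ℂ A).toLinearMap ∘ₗ TensorProduct.map h LinearMap.id

/-- `id ⊗ h : A ⊗ A → A`. -/
noncomputable def rap (h : A →ₗ[ℂ] ℂ) : A ⊗[ℂ] A →ₗ[ℂ] A :=
  (TensorProduct.rid ℂ A).toLinearMap ∘ₗ TensorProduct.map LinearMap.id h

set_option linter.unusedSectionVars false in
/-- Strong invariance: `∑ h(a₁ b) a₂ = ∑ h(a b₁) S(b₂)`. -/
lemma star_star_id (h : A →ₗ[ℂ] ℂ)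
    (h_left_inv : ∀ a : A, lap h (Coalgebra.comul a) = h a • 1)
    (a b : A) {ι κ : Type*} (ra : Coalgebra.Repr ℂ a ι) (rb : Coalgebra.Repr ℂ b κ) :
    ∑ i ∈ ra.index, h (ra.left i * b) • ra.right i
      = ∑ j ∈ rb.index, h (a * rb.left j) • HopfAlgebra.antipode (R := ℂ) (rb.right j) := by
  set S : A →ₗ[ℂ] A := HopfAlgebra.antipode (R := ℂ) with hS
  set Ξ : A ⊗[ℂ] A →ₗ[ℂ] A := ∑ i ∈ ra.index,
    ((TensorProduct.lid ℂ A).toLinearMap ∘ₗ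
      TensorProduct.map (h ∘ₗ LinearMap.mulLeft ℂ (ra.left i)) (LinearMap.mulLeft ℂ (ra.right i)))
    with hΞ
  set Θ : (A ⊗[ℂ] A) ⊗[ℂ] A →ₗ[ℂ] A := LinearMap.mul' ℂ A ∘ₗ
    TensorProduct.map (lap h ∘ₗ LinearMap.mulLeft ℂ (Coalgebra.comul a)) S with hΘ
  set μ : A ⊗[ℂ] A →ₗ[ℂ] A := LinearMap.mul' ℂ A ∘ₗ LinearMap.lTensor A S with hμ
  have step1 : Θ = Ξ ∘ₗ LinearMap.lTensor A μ ∘ₗ (TensorProduct.assoc ℂ A A A).toLinearMap := by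
    apply TensorProduct.ext_threefold
    intro p q r
    simp only [hΘ, hΞ, hμ, LinearMap.comp_apply, TensorProduct.map_tmul,
      LinearMap.mul'_apply, LinearEquiv.coe_coe, TensorProduct.assoc_tmul,
      LinearMap.lTensor_tmul, LinearMap.sum_apply, TensorProduct.lid_tmul,
      LinearMap.mulLeft_apply]
    rw [← ra.eq, Finset.sum_mul]
    simp only [Algebra.TensorProduct.tmul_mul_tmul, map_sum, lap,
      LinearMap.comp_apply, TensorProduct.map_tmul, LinearMap.id_coe, id_eq,
      LinearEquiv.coe_coe, TensorProduct.lid_tmul, LinearMap.coe_comp,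
      Function.comp_apply, LinearMap.mulLeft_apply]
    rw [Finset.sum_mul]
    exact Finset.sum_congr rfl fun i _ => by rw [smul_mul_assoc, mul_assoc]
  have step2 : ∀ j, Θ ((Coalgebra.comul (rb.left j)) ⊗ₜ[ℂ] rb.right j)
      = h (a * rb.left j) • S (rb.right j) := by
    intro j
    simp only [hΘ, LinearMap.comp_apply, TensorProduct.map_tmul, LinearMap.mul'_apply,
      LinearMap.mulLeft_apply]
    rw [← Bialgebra.comul_mul, h_left_inv, smul_mul_assoc, one_mul]
  symm
  calc
    ∑ j ∈ rb.index, h (a * rb.left j) • S (rb.right j)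
        = ∑ j ∈ rb.index, Θ ((Coalgebra.comul (rb.left j)) ⊗ₜ[ℂ] rb.right j) := by
          simp [step2]
    _ = Θ (LinearMap.rTensor A (Coalgebra.comul (R := ℂ)) (Coalgebra.comul b)) := by
          rw [← rb.eq, map_sum, map_sum]
          simp [LinearMap.rTensor_tmul]
    _ = Ξ (LinearMap.lTensor A μ ((TensorProduct.assoc ℂ A A A)
            (LinearMap.rTensor A (Coalgebra.comul (R := ℂ)) (Coalgebra.comul b)))) := by
          rw [step1]; rfl
    _ = Ξ (LinearMap.lTensor A μ (LinearMap.lTensor A (Coalgebra.comul (R := ℂ))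
            (Coalgebra.comul b))) := by rw [Coalgebra.coassoc_apply]
    _ = Ξ (LinearMap.lTensor A (μ ∘ₗ Coalgebra.comul (R := ℂ)) (Coalgebra.comul b)) := by
          rw [← LinearMap.lTensor_comp_apply]
    _ = Ξ (LinearMap.lTensor A ((Algebra.linearMap ℂ A) ∘ₗ Coalgebra.counit (R := ℂ))
            (Coalgebra.comul b)) := by
          rw [hμ, LinearMap.comp_assoc, HopfAlgebra.mul_antipode_lTensor_comul]
    _ = Ξ (b ⊗ₜ[ℂ] 1) := by
          rw [LinearMap.lTensor_comp_apply, Coalgebra.lTensor_counit_comul]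
          simp
    _ = ∑ i ∈ ra.index, h (ra.left i * b) • ra.right i := by
          simp [hΞ, LinearMap.sum_apply]

set_option linter.unusedSectionVars false in
/-- `Gmap` in terms of a Sweedler representation. -/
lemma Gmap_repr (φ : A →ₗ[ℂ] ℂ) (c : A) {ι : Type*} (rc : Coalgebra.Repr ℂ c ι) :
    Gmap φ c = ∑ i ∈ rc.index, φ (rc.right i) • rc.left i := by
  simp only [Gmap, LinearMap.comp_apply]
  rw [← rc.eq, map_sum, map_sum]
  simp

lemma s_sum_aux {M : Type*} [AddCommMonoid M] (s : M → M)
    (hs_add : ∀ x y : M, s (x + y) = s x + s y) (hs_zero : s 0 = 0)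
    {ι : Type*} (t : Finset ι) (f : ι → M) :
    s (∑ i ∈ t, f i) = ∑ i ∈ t, s (f i) := by
  classical
  induction t using Finset.cons_induction with
  | empty => simpa using hs_zero
  | cons i t hi ih => rw [Finset.sum_cons, Finset.sum_cons, hs_add, ih]

theorem G_star_map
    -- the Haar functional and its properties
    (h : A →ₗ[ℂ] ℂ) (h_unital : h 1 = 1)
    (h_pos : ∀ a : A, 0 ≤ h (star a * a))
    (h_faithful : ∀ a : A, h (star a * a) = 0 → a = 0)
    (h_left_inv : ∀ a : A, lap h (Coalgebra.comul a) = h a • 1)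
    (h_right_inv : ∀ a : A, rap h (Coalgebra.comul a) = h a • 1)
    -- `s` is the star operation of the *-algebra `A ⊗ A` and the comultiplication
    -- is a *-homomorphism (Hopf *-algebra structure)
    (s : A ⊗[ℂ] A → A ⊗[ℂ] A)
    (hs_add : ∀ x y : A ⊗[ℂ] A, s (x + y) = s x + s y)
    (hs_smul : ∀ (r : ℂ) (x : A ⊗[ℂ] A), s (r • x) = (starRingEnd ℂ) r • s x)
    (hs_tmul : ∀ a b : A, s (a ⊗ₜ[ℂ] b) = star a ⊗ₜ[ℂ] star b)
    (hcomul_star : ∀ a : A, Coalgebra.comul (R := ℂ) (star a) = s (Coalgebra.comul a))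
    -- `φ` and its involution `φ* : a ↦ conj (φ (S(a)*))`
    (φ ψ : A →ₗ[ℂ] ℂ)
    (hψ : ∀ a : A, ψ a = (starRingEnd ℂ) (φ (star (HopfAlgebra.antipode (R := ℂ) a)))) :
    -- `⟨𝒢(φ) a, b⟩ = ⟨a, 𝒢(φ*) b⟩`, i.e. the adjoint of `𝒢(φ)` is `𝒢(φ*)`
    ∀ a b : A, h (star (Gmap φ a) * b) = h (star a * Gmap ψ b) := by
  intro a b
  classical
  have hs_zero : s 0 = 0 := by simpa using hs_smul 0 0
  set ra := Coalgebra.Repr.arbitrary ℂ a with hra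
  set rb := Coalgebra.Repr.arbitrary ℂ b with hrb
  have rsa_eq : ∑ i ∈ ra.index, star (ra.left i) ⊗ₜ[ℂ] star (ra.right i)
      = Coalgebra.comul (R := ℂ) (star a) := by
    rw [hcomul_star, ← ra.eq, s_sum_aux s hs_add hs_zero]
    exact Finset.sum_congr rfl fun i _ => (hs_tmul _ _).symm
  let rsa : Coalgebra.Repr ℂ (star a) (A × A) :=
    ⟨ra.index, fun i => star (ra.left i), fun i => star (ra.right i), rsa_eq⟩
  have key : ∑ i ∈ ra.index, h (star (ra.left i) * b) • star (ra.right i)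
      = ∑ j ∈ rb.index, h (star a * rb.left j) •
          HopfAlgebra.antipode (R := ℂ) (rb.right j) :=
    star_star_id h h_left_inv (star a) b rsa rb
  have key2 := congrArg (fun z : A => (starRingEnd ℂ) (φ (star z))) key
  simp only [star_sum, star_smul, star_star, map_sum, LinearMap.map_smul, smul_eq_mul,
    map_mul, Complex.conj_conj, starRingEnd_apply] at key2
  rw [Gmap_repr φ a ra, Gmap_repr ψ b rb]
  simp only [star_sum, star_smul, Finset.sum_mul, Finset.mul_sum, smul_mul_assoc,
    mul_smul_comm, map_sum, LinearMap.map_smul, smul_eq_mul, hψ, starRingEnd_apply]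
  refine Eq.trans (Finset.sum_congr rfl fun i _ => mul_comm _ _)
    (key2.trans (Finset.sum_congr rfl fun j _ => mul_comm _ _))


end
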